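/- Let N ≥ 1, let u : Fin N → EuclideanSpace ℂ (Fin N) be an orthonormal basis, let E : Fin N → ℝ with E 0 < E i for all i ≠ 0 and E i ≤ E (N-1) for all i, and let T be the self-adjoint linear operator defined by T (u i) = (E i) • (u i). Let μ > 0 with μ < 1/(E (N-1) + E 0) whenever E (N-1) + E 0 > 0, and set G = id - (2μ) • T. Let φ₀ be a unit vector with ⟪u 0, φ₀⟫ ≠ 0. Then ‖⟪u 0, G^s φ₀⟫‖ / ‖G^s φ₀‖ tends to 1 as s → ∞. -/

import Mathlib

open Filter

/-- Theorem 1 (convergence form): the normalized iterates `G^s φ₀ / ‖G^s φ₀‖` of the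
gradient operator `G = id - 2μ T` converge to the ground state, i.e. the fidelity with
`u 0` tends to `1`. -/
theorem stmt_2 (n : ℕ)
    (u : Fin (n + 1) → EuclideanSpace ℂ (Fin (n + 1)))
    (hu : Orthonormal ℂ u)
    (E : Fin (n + 1) → ℝ)
    (hE0 : ∀ i : Fin (n + 1), i ≠ 0 → E 0 < E i)
    (hEtop : ∀ i : Fin (n + 1), E i ≤ E (Fin.last n))
    (T : EuclideanSpace ℂ (Fin (n + 1)) →ₗ[ℂ] EuclideanSpace ℂ (Fin (n + 1)))
    (hTsa : T.IsSymmetric)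
    (hT : ∀ i, T (u i) = (E i : ℂ) • u i)
    (μ : ℝ) (hμ : 0 < μ)
    (hμ' : E (Fin.last n) + E 0 > 0 → μ < 1 / (E (Fin.last n) + E 0))
    (G : EuclideanSpace ℂ (Fin (n + 1)) →ₗ[ℂ] EuclideanSpace ℂ (Fin (n + 1)))
    (hG : G = LinearMap.id - ((2 * μ : ℝ) : ℂ) • T)
    (φ₀ : EuclideanSpace ℂ (Fin (n + 1))) (hφ₀ : ‖φ₀‖ = 1)
    (hover : (inner ℂ (u 0) φ₀ : ℂ) ≠ 0) :
    Tendsto (fun s : ℕ => ‖(inner ℂ (u 0) ((G ^ s) φ₀) : ℂ)‖ / ‖(G ^ s) φ₀‖)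
      atTop (nhds 1) := by
  classical
  set c : Fin (n + 1) → ℂ := fun i => inner ℂ (u i) φ₀ with hc
  set g : Fin (n + 1) → ℝ := fun i => 1 - 2 * μ * E i with hgdef
  -- key scalar inequalities
  have hsum : ∀ i, μ * (E 0 + E i) < 1 := by
    intro i
    rcases le_or_gt (E (Fin.last n) + E 0) 0 with h | h
    · nlinarith [hEtop i]
    · have := hμ' h
      have h2 : μ * (E (Fin.last n) + E 0) < 1 := by
        rw [lt_div_iff₀ h] at this; linarith
      nlinarith [hEtop i]
  have hg0 : 0 < g 0 := by
    have := hsum 0; simp only [hgdef]; nlinarith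
  have hglt : ∀ i, i ≠ 0 → |g i| < g 0 := by
    intro i hi
    have h1 := hE0 i hi
    have h2 := hsum i
    rw [abs_lt]
    constructor <;> simp only [hgdef] <;> nlinarith
  have hg0ne : g 0 ≠ 0 := ne_of_gt hg0
  -- basis representation
  have hcard : Fintype.card (Fin (n+1)) = Module.finrank ℂ (EuclideanSpace ℂ (Fin (n+1))) := by
    rw [finrank_euclideanSpace]
  set b := basisOfLinearIndependentOfCardEqFinrank hu.linearIndependent hcard with hbdef
  have hb : ⇑b = u := coe_basisOfLinearIndependentOfCardEqFinrank _ _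
  set ob := b.toOrthonormalBasis (by rwa [hb]) with hobdef
  have hob : ⇑ob = u := by rw [hobdef, Module.Basis.coe_toOrthonormalBasis, hb]
  have hrepr : φ₀ = ∑ i, c i • u i := by
    have := ob.sum_repr' φ₀
    rw [hob] at this
    exact this.symm
  have hGu : ∀ i, G (u i) = ((g i : ℝ) : ℂ) • u i := by
    intro i
    have hcast : ((g i : ℝ) : ℂ) = 1 - ((2 * μ : ℝ) : ℂ) * ((E i : ℝ) : ℂ) := by
      simp only [hgdef]; push_cast; ring
    simp only [hG, LinearMap.sub_apply, LinearMap.id_apply, LinearMap.smul_apply, hT]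
    rw [hcast, sub_smul, one_smul, smul_smul]
  have hGs : ∀ s : ℕ, (G ^ s) φ₀ = ∑ i, (c i * ((g i : ℂ)) ^ s) • u i := by
    intro s
    induction s with
    | zero => simpa using hrepr
    | succ s ih =>
      rw [pow_succ', Module.End.mul_apply, ih, map_sum]
      refine Finset.sum_congr rfl fun i _ => ?_
      rw [map_smul, hGu i, smul_smul, pow_succ]
      ring_nf
  -- numerator
  have hnum : ∀ s : ℕ, (inner ℂ (u 0) ((G ^ s) φ₀) : ℂ) = c 0 * ((g 0 : ℂ)) ^ s := by
    intro s
    rw [hGs s]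
    exact hu.inner_right_fintype _ 0
  -- norm of iterate
  set F : ℕ → ℝ := fun s => ∑ i, ‖c i‖ ^ 2 * (((g i / g 0) ^ 2) ^ s) with hF
  have hnormsq : ∀ s : ℕ, ‖(G ^ s) φ₀‖ ^ 2 = (g 0 ^ 2) ^ s * F s := by
    intro s
    have h2 : ‖(G ^ s) φ₀‖ ^ 2 = ∑ i, ‖c i * ((g i : ℂ)) ^ s‖ ^ 2 := by
      have h3 : (inner ℂ ((G ^ s) φ₀) ((G ^ s) φ₀) : ℂ)
          = ∑ i, (starRingEnd ℂ) (c i * ((g i : ℂ)) ^ s) * (c i * ((g i : ℂ)) ^ s) := by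
        rw [hGs s]; exact hu.inner_sum _ _ _
      have h4 := inner_self_eq_norm_sq (𝕜 := ℂ) ((G ^ s) φ₀)
      rw [h3, map_sum] at h4
      rw [← h4]
      refine Finset.sum_congr rfl fun i _ => ?_
      rw [mul_comm, Complex.mul_conj]
      simp [RCLike.re_to_complex, Complex.normSq_eq_norm_sq]
      norm_cast
    rw [h2, hF, Finset.mul_sum]
    refine Finset.sum_congr rfl fun i _ => ?_
    have h4 : ‖c i * ((g i : ℂ)) ^ s‖ ^ 2 = ‖c i‖ ^ 2 * (g i ^ 2) ^ s := by
      rw [norm_mul, norm_pow, Complex.norm_real, mul_pow, ← pow_mul, mul_comm s 2, pow_mul,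
        Real.norm_eq_abs, sq_abs]
    have key : (g i ^ 2) ^ s = (g 0 ^ 2) ^ s * ((g i / g 0) ^ 2) ^ s := by
      rw [← mul_pow]
      congr 1
      field_simp
    rw [h4, key]
    ring
  have hFnonneg : ∀ s, 0 ≤ F s := by
    intro s
    apply Finset.sum_nonneg
    intro i _
    positivity
  have hnorm : ∀ s : ℕ, ‖(G ^ s) φ₀‖ = g 0 ^ s * Real.sqrt (F s) := by
    intro s
    have h1 : ‖(G ^ s) φ₀‖ = Real.sqrt ((g 0 ^ 2) ^ s * F s) := by
      rw [← hnormsq s, Real.sqrt_sq (norm_nonneg _)]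
    rw [h1, Real.sqrt_mul (by positivity), ← pow_mul, mul_comm 2 s, pow_mul,
      Real.sqrt_sq (pow_nonneg hg0.le s)]
  -- the ratio simplifies
  have hratio : ∀ s : ℕ, ‖(inner ℂ (u 0) ((G ^ s) φ₀) : ℂ)‖ / ‖(G ^ s) φ₀‖
      = ‖c 0‖ / Real.sqrt (F s) := by
    intro s
    rw [hnum s, hnorm s, norm_mul, norm_pow, Complex.norm_real, Real.norm_eq_abs,
      abs_of_pos hg0, mul_comm (‖c 0‖), mul_div_mul_left]
    positivity
  -- limit of F
  have hc0 : ‖c 0‖ ≠ 0 := norm_ne_zero_iff.mpr hover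
  have hFlim : Tendsto F atTop (nhds (‖c 0‖ ^ 2)) := by
    have h1 : Tendsto F atTop
        (nhds (∑ i : Fin (n + 1), if i = 0 then ‖c 0‖ ^ 2 else 0)) := by
      apply tendsto_finset_sum
      intro i _
      by_cases hi : i = 0
      · subst hi
        simp only [if_pos rfl, div_self hg0ne, one_pow, mul_one]
        exact tendsto_const_nhds
      · simp only [if_neg hi]
        have hq0 : (0:ℝ) ≤ (g i / g 0) ^ 2 := sq_nonneg _
        have hq1 : (g i / g 0) ^ 2 < 1 := by
          rw [sq_lt_one_iff_abs_lt_one, abs_div, abs_of_pos hg0, div_lt_one hg0]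
          exact hglt i hi
        have h3 := (tendsto_pow_atTop_nhds_zero_of_lt_one hq0 hq1).const_mul (‖c i‖ ^ 2)
        simpa using h3
    simpa using h1
  have hsq : Tendsto (fun s => Real.sqrt (F s)) atTop (nhds ‖c 0‖) := by
    have := (Real.continuous_sqrt.tendsto (‖c 0‖ ^ 2)).comp hFlim
    rwa [Real.sqrt_sq (norm_nonneg _)] at this
  have hfinal : Tendsto (fun s => ‖c 0‖ / Real.sqrt (F s)) atTop (nhds 1) := by
    have := (tendsto_const_nhds (x := ‖c 0‖) (f := atTop)).div hsq hc0
    rwa [div_self hc0] at this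
  exact hfinal.congr fun s => (hratio s).symm
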